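/- arXiv:1511.08826 — 3 statements merged into one kernel-verified Lean document; each statement's English description precedes it below -/
import Mathlib

section
/- Let τ ≥ 3 be an odd integer and let H be a finite bipartite simple graph with parts A and B, each of size n, such that: H is regular of degree Δ; H has girth at least 6; for every a ∈ A and every b ∈ B there is a walk in H of length at most τ from a to b; and H is self-dual, meaning there is a bijection σ : A → B such that the map sending each a ∈ A to σ(a) and each b ∈ B to σ^{−1}(b) is an automorphism of H. Then there exists a finite simple graph Ψ on exactly τ·n vertices that is regular of degree 2Δ, has girth at least min{τ, 4}, and in which any two distinct vertices are joined by a walk of length at most τ (so χ(Ψ^τ) ≥ τ·n). -/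
/-- The `t`-th power of a simple graph `G`: two distinct vertices are adjacent
iff they are joined in `G` by a walk of length at most `t`. -/
def SimpleGraph.power {V : Type*} (G : SimpleGraph V) (t : ℕ) : SimpleGraph V where
  Adj u v := u ≠ v ∧ ∃ w : G.Walk u v, w.length ≤ t
  symm := by
    constructor
    rintro u v ⟨huv, w, hw⟩
    exact ⟨huv.symm, w.reverse, by simpa using hw⟩
  loopless := by constructor; rintro u ⟨h, -⟩; exact h rfl

section Aux

variable {W : Type} (H : SimpleGraph W) (A B : Set W) (σ : W ≃ W)

/-- The cyclic conduit graph: `τ` layers indexed by `ZMod τ`, each a copy of `A`,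
with `(i,a)` adjacent to `(i±1,b)` iff `H.Adj (σ a) b`. -/
def PsiGraph (τ : ℕ) (hτ : 3 ≤ τ)
    (hσ : ∀ u v : W, H.Adj (σ u) (σ v) ↔ H.Adj u v)
    (hinv : ∀ w : W, σ (σ w) = w) : SimpleGraph (ZMod τ × ↥A) where
  Adj x y := (y.1 = x.1 + 1 ∨ x.1 = y.1 + 1) ∧ H.Adj (σ x.2) y.2
  symm := by
    constructor
    rintro ⟨i, a⟩ ⟨j, b⟩ ⟨hij, hab⟩
    refine ⟨hij.symm, ?_⟩
    have h2 : H.Adj (σ (σ (a : W))) (σ (b : W)) := (hσ _ _).mpr hab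
    rw [hinv] at h2
    exact h2.symm
  loopless := by
    constructor
    rintro ⟨i, a⟩ ⟨hii, -⟩
    have h1 : (1 : ZMod τ) = 0 := by
      rcases hii with h | h <;> exact (left_eq_add.mp h)
    have h2 : τ ∣ 1 := (ZMod.natCast_eq_zero_iff 1 τ).mp (by exact_mod_cast h1)
    have := Nat.le_of_dvd one_pos h2
    omega

lemma PsiGraph_adj {τ : ℕ} (hτ : 3 ≤ τ)
    (hσ : ∀ u v : W, H.Adj (σ u) (σ v) ↔ H.Adj u v)
    (hinv : ∀ w : W, σ (σ w) = w) (x y : ZMod τ × ↥A) :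
    (PsiGraph H A σ τ hτ hσ hinv).Adj x y ↔
      (y.1 = x.1 + 1 ∨ x.1 = y.1 + 1) ∧ H.Adj (σ x.2) y.2 := Iff.rfl

open Classical in
/-- Fold `W` to the `A`-side using `σ`. -/
noncomputable def toA (hcover : ∀ w : W, w ∈ A ∨ w ∈ B) (hσBA : ∀ b ∈ B, σ b ∈ A)
    (w : W) : ↥A :=
  if h : w ∈ A then ⟨w, h⟩ else ⟨σ w, hσBA w ((hcover w).resolve_left h)⟩

lemma toA_coe_of_mem (hcover : ∀ w : W, w ∈ A ∨ w ∈ B) (hσBA : ∀ b ∈ B, σ b ∈ A)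
    {w : W} (h : w ∈ A) : ((toA A B σ hcover hσBA w) : W) = w := by
  simp [toA, h]

lemma toA_coe_of_not_mem (hcover : ∀ w : W, w ∈ A ∨ w ∈ B) (hσBA : ∀ b ∈ B, σ b ∈ A)
    {w : W} (h : w ∉ A) : ((toA A B σ hcover hσBA w) : W) = σ w := by
  simp [toA, h]

lemma toA_step (hcover : ∀ w : W, w ∈ A ∨ w ∈ B) (hdisj : Disjoint A B)
    (hbip : ∀ u v : W, H.Adj u v → (u ∈ A ∧ v ∈ B) ∨ (u ∈ B ∧ v ∈ A))
    (hσ : ∀ u v : W, H.Adj (σ u) (σ v) ↔ H.Adj u v)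
    (hinv : ∀ w : W, σ (σ w) = w)
    (hσBA : ∀ b ∈ B, σ b ∈ A)
    {x y : W} (h : H.Adj x y) :
    H.Adj (σ ((toA A B σ hcover hσBA x) : W)) ((toA A B σ hcover hσBA y) : W) := by
  rcases hbip x y h with ⟨hx, hy⟩ | ⟨hx, hy⟩
  · have hyA : y ∉ A := fun hyA => Set.disjoint_left.mp hdisj hyA hy
    rw [toA_coe_of_mem A B σ hcover hσBA hx, toA_coe_of_not_mem A B σ hcover hσBA hyA]
    exact (hσ x y).mpr h
  · have hxA : x ∉ A := fun hxA => Set.disjoint_left.mp hdisj hxA hx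
    rw [toA_coe_of_not_mem A B σ hcover hσBA hxA, toA_coe_of_mem A B σ hcover hσBA hy,
      hinv]
    exact h

/-- Lift an `H`-walk to a `Ψ`-walk with a prescribed number of forward (`k`) and
backward (`m`) layer steps. -/
lemma psi_lift {τ : ℕ} (hτ : 3 ≤ τ)
    (hcover : ∀ w : W, w ∈ A ∨ w ∈ B) (hdisj : Disjoint A B)
    (hbip : ∀ u v : W, H.Adj u v → (u ∈ A ∧ v ∈ B) ∨ (u ∈ B ∧ v ∈ A))
    (hσ : ∀ u v : W, H.Adj (σ u) (σ v) ↔ H.Adj u v)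
    (hinv : ∀ w : W, σ (σ w) = w)
    (hσBA : ∀ b ∈ B, σ b ∈ A)
    {x y : W} (w : H.Walk x y) :
    ∀ (i j : ZMod τ) (k m : ℕ), k + m = w.length →
      j = i + (k : ZMod τ) - (m : ZMod τ) →
      ∃ ψ : (PsiGraph H A σ τ hτ hσ hinv).Walk
          (i, toA A B σ hcover hσBA x) (j, toA A B σ hcover hσBA y),
        ψ.length = w.length := by
  induction w with
  | nil =>
    intro i j k m hkm hj
    obtain ⟨rfl, rfl⟩ : k = 0 ∧ m = 0 := by
      simp only [SimpleGraph.Walk.length_nil] at hkm; omega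
    have hji : j = i := by simpa using hj
    subst hji
    exact ⟨SimpleGraph.Walk.nil, rfl⟩
  | @cons x z y h p ih =>
    intro i j k m hkm hj
    simp only [SimpleGraph.Walk.length_cons] at hkm ⊢
    rcases Nat.eq_zero_or_pos k with hk | hk
    · subst hk
      have hm : 1 ≤ m := by omega
      obtain ⟨ψ, hψ⟩ := ih (i - 1) j 0 (m - 1) (by omega)
        (by
          rw [hj]
          have hc : ((m - 1 : ℕ) : ZMod τ) = (m : ZMod τ) - 1 := by
            have he : m = (m - 1) + 1 := by omega
            rw [he]; push_cast; ring
          rw [hc]; push_cast; ring)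
      have hadj : (PsiGraph H A σ τ hτ hσ hinv).Adj (i, toA A B σ hcover hσBA x)
          (i - 1, toA A B σ hcover hσBA z) :=
        ⟨Or.inr (by ring), toA_step H A B σ hcover hdisj hbip hσ hinv hσBA h⟩
      exact ⟨SimpleGraph.Walk.cons hadj ψ, by simp [hψ]⟩
    · obtain ⟨ψ, hψ⟩ := ih (i + 1) j (k - 1) m (by omega)
        (by
          rw [hj]
          have hc : ((k - 1 : ℕ) : ZMod τ) = (k : ZMod τ) - 1 := by
            have he : k = (k - 1) + 1 := by omega
            rw [he]; push_cast; ring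
          rw [hc]; push_cast; ring)
      have hadj : (PsiGraph H A σ τ hτ hσ hinv).Adj (i, toA A B σ hcover hσBA x)
          (i + 1, toA A B σ hcover hσBA z) :=
        ⟨Or.inl rfl, toA_step H A B σ hcover hdisj hbip hσ hinv hσBA h⟩
      exact ⟨SimpleGraph.Walk.cons hadj ψ, by simp [hψ]⟩

lemma walk_first_edge {x y : W} (w : H.Walk x y) (hne : x ≠ y) : ∃ z, H.Adj x z := by
  induction w with
  | nil => exact absurd rfl hne
  | cons h p ih => exact ⟨_, h⟩

end Aux

/-- An `H`-cycle of length `τ` from a self-dual good conduit: if `τ ≥ 3` is odd and `H` is a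
bipartite graph with parts `A`, `B` of size `n`, regular of degree `Δ`, of girth at least
`6`, with a walk of length at most `τ` between any `a ∈ A` and `b ∈ B`, and self-dual
(there is an involutive automorphism of `H` swapping `A` and `B`), then there is a graph `Ψ`
on `τ·n` vertices, regular of degree `2Δ`, of girth at least `min {τ, 4}`, in which any two
distinct vertices are joined by a walk of length at most `τ`, whence `χ(Ψ^τ) ≥ τ·n`. -/
theorem conduit_cycle_construction
    (τ : ℕ) (hτ : 3 ≤ τ) (hτodd : Odd τ)
    (W : Type) [Fintype W] (H : SimpleGraph W) (A B : Set W) (n Δ : ℕ)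
    (hcover : ∀ w : W, w ∈ A ∨ w ∈ B) (hdisj : Disjoint A B)
    (hbip : ∀ u v : W, H.Adj u v → (u ∈ A ∧ v ∈ B) ∨ (u ∈ B ∧ v ∈ A))
    (hA : A.ncard = n) (hB : B.ncard = n)
    (hreg : ∀ v : W, {w : W | H.Adj v w}.ncard = Δ)
    (hgirth : 6 ≤ H.egirth)
    (hwalk : ∀ a ∈ A, ∀ b ∈ B, ∃ w : H.Walk a b, w.length ≤ τ)
    (hselfdual : ∃ σ : W ≃ W, (∀ u v : W, H.Adj (σ u) (σ v) ↔ H.Adj u v) ∧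
      (∀ a ∈ A, σ a ∈ B) ∧ (∀ w : W, σ (σ w) = w)) :
    ∃ (V : Type) (_ : Fintype V) (Ψ : SimpleGraph V),
      Fintype.card V = τ * n ∧
      (∀ v : V, {w : V | Ψ.Adj v w}.ncard = 2 * Δ) ∧
      ((min τ 4 : ℕ) : ℕ∞) ≤ Ψ.egirth ∧
      (∀ u v : V, u ≠ v → ∃ w : Ψ.Walk u v, w.length ≤ τ) ∧
      ((τ * n : ℕ) : ℕ∞) ≤ (Ψ.power τ).chromaticNumber := by
  classical
  obtain ⟨σ, hσ, hσAB, hσinv⟩ := hselfdual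
  haveI : NeZero τ := ⟨by omega⟩
  haveI : Fintype ↥A := Fintype.ofFinite _
  have hAB : ∀ w : W, w ∈ A → w ∈ B → False := fun w h1 h2 => Set.disjoint_left.mp hdisj h1 h2
  -- σ maps B into A
  have hσBA : ∀ b ∈ B, σ b ∈ A := by
    have himg : σ '' A = B := by
      apply Set.eq_of_subset_of_ncard_le
      · rintro _ ⟨a, ha, rfl⟩; exact hσAB a ha
      · rw [Set.ncard_image_of_injective _ σ.injective, hA, hB]
      · exact Set.toFinite B
    intro b hb
    rw [← himg] at hb
    obtain ⟨a, ha, rfl⟩ := hb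
    rw [hσinv]; exact ha
  set Ψ := PsiGraph H A σ τ hτ hσ hσinv with hΨ
  have hcast : ∀ m : ℕ, 0 < m → m < τ → ((m : ZMod τ) ≠ 0) := by
    intro m h1 h2 h
    have hd := (ZMod.natCast_eq_zero_iff m τ).mp h
    have := Nat.le_of_dvd h1 hd
    omega
  -- parity of walks between the two sides
  have par2 : ∀ {x y : W} (w : H.Walk x y),
      ((x ∈ A ∧ y ∈ A) ∨ (x ∈ B ∧ y ∈ B) → Even w.length) ∧
      ((x ∈ A ∧ y ∈ B) ∨ (x ∈ B ∧ y ∈ A) → Odd w.length) := by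
    intro x y w
    induction w with
    | nil =>
      refine ⟨fun _ => Even.zero, ?_⟩
      rintro (⟨h1, h2⟩ | ⟨h1, h2⟩)
      · exact (hAB _ h1 h2).elim
      · exact (hAB _ h2 h1).elim
    | @cons x z y h p ih =>
      have hz := hbip x z h
      constructor
      · rintro (⟨hx, hy⟩ | ⟨hx, hy⟩) <;>
          simp only [SimpleGraph.Walk.length_cons, Nat.even_add_one, Nat.not_even_iff_odd]
        · rcases hz with ⟨-, hzB⟩ | ⟨hxB, -⟩
          · exact ih.2 (Or.inr ⟨hzB, hy⟩)
          · exact (hAB _ hx hxB).elim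
        · rcases hz with ⟨hxA, -⟩ | ⟨-, hzA⟩
          · exact (hAB _ hxA hx).elim
          · exact ih.2 (Or.inl ⟨hzA, hy⟩)
      · rintro (⟨hx, hy⟩ | ⟨hx, hy⟩) <;>
          simp only [SimpleGraph.Walk.length_cons, Nat.odd_add_one, Nat.not_odd_iff_even]
        · rcases hz with ⟨-, hzB⟩ | ⟨hxB, -⟩
          · exact ih.1 (Or.inr ⟨hzB, hy⟩)
          · exact (hAB _ hx hxB).elim
        · rcases hz with ⟨hxA, -⟩ | ⟨-, hzA⟩
          · exact (hAB _ hxA hx).elim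
          · exact ih.1 (Or.inl ⟨hzA, hy⟩)
  -- walk extension by even amounts
  have ext2 : ∀ {x y : W} (_ : ∃ z, H.Adj x z) (w : H.Walk x y) (k : ℕ),
      ∃ w' : H.Walk x y, w'.length = w.length + 2 * k := by
    intro x y hx w k
    induction k with
    | zero => exact ⟨w, by omega⟩
    | succ k ih =>
      obtain ⟨w', hw'⟩ := ih
      obtain ⟨z, hz⟩ := hx
      exact ⟨.cons hz (.cons hz.symm w'), by simp [hw']; omega⟩
  -- every vertex of A has a neighbour
  have hnbr : ∀ x ∈ A, ∃ z, H.Adj x z := by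
    intro x hx
    obtain ⟨w, -⟩ := hwalk x hx (σ x) (hσAB x hx)
    have hne : x ≠ σ x := fun e => hAB x hx (e ▸ hσAB x hx)
    exact walk_first_edge H w hne
  -- fold facts
  have hfA : ∀ a : ↥A, toA A B σ hcover hσBA (a : W) = a := fun a =>
    Subtype.ext (toA_coe_of_mem A B σ hcover hσBA a.2)
  have hfB : ∀ a : ↥A, toA A B σ hcover hσBA (σ (a : W)) = a := by
    intro a
    have hnx : σ (a : W) ∉ A := fun h => hAB _ h (hσAB _ a.2)
    refine Subtype.ext ?_
    rw [toA_coe_of_not_mem A B σ hcover hσBA hnx, hσinv]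
  -- walks of length ≤ τ between any two distinct vertices of Ψ
  have hwalks : ∀ u v : ZMod τ × ↥A, u ≠ v → ∃ w : Ψ.Walk u v, w.length ≤ τ := by
    rintro ⟨i, a⟩ ⟨j, b⟩ huv
    set d := (j - i).val with hd
    have hdlt : d < τ := ZMod.val_lt _
    have hdcast : ((d : ℕ) : ZMod τ) = j - i := by
      rw [hd, ZMod.natCast_val, ZMod.cast_id]
    obtain ⟨w0, hw0len⟩ := hwalk (a : W) a.2 (σ (b : W)) (hσAB _ b.2)
    have hodd : Odd w0.length := (par2 w0).2 (Or.inl ⟨a.2, hσAB _ b.2⟩)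
    have hτodd' : τ % 2 = 1 := Nat.odd_iff.mp hτodd
    have hw0odd : w0.length % 2 = 1 := Nat.odd_iff.mp hodd
    -- the target length
    set t : ℕ := if d % 2 = 1 then d else τ - d with ht
    have htodd : t % 2 = 1 := by
      rcases Nat.decEq (d % 2) 1 with h | h
      · simp only [ht, if_neg h]; omega
      · simp only [ht, if_pos h]; omega
    have htle : t ≤ τ := by
      simp only [ht]; split <;> omega
    set ℓ : ℕ := max w0.length t with hℓ
    have hw0ℓ : w0.length ≤ ℓ := le_max_left _ _
    have htℓ : t ≤ ℓ := le_max_right _ _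
    have hℓτ : ℓ ≤ τ := max_le hw0len htle
    have hℓodd : ℓ % 2 = 1 := by
      rcases max_cases w0.length t with ⟨h1, -⟩ | ⟨h1, -⟩ <;> omega
    obtain ⟨w1, hw1⟩ := ext2 (hnbr (a : W) a.2) w0 ((ℓ - w0.length) / 2)
    have hw1len : w1.length = ℓ := by omega
    -- choose forward/backward step counts
    rcases Nat.decEq (d % 2) 1 with hpar | hpar
    · -- d even: k - m ≡ d - τ
      have htd : t = τ - d := by simp only [ht, if_neg hpar]
      have hℓge : τ - d ≤ ℓ := htd ▸ htℓ
      set k : ℕ := (ℓ - (τ - d)) / 2 with hk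
      set m : ℕ := (ℓ + (τ - d)) / 2 with hm
      have hkm : k + m = ℓ := by omega
      have hm2 : m = k + (τ - d) := by omega
      have hZ : j = i + (k : ZMod τ) - (m : ZMod τ) := by
        rw [hm2]
        push_cast [Nat.cast_sub hdlt.le]
        rw [ZMod.natCast_self, hdcast]
        ring
      rw [← hfA a, ← hfB b]
      obtain ⟨ψ, hψ⟩ := psi_lift H A B σ hτ hcover hdisj hbip hσ hσinv hσBA w1 i j k m
        (by omega) hZ
      exact ⟨ψ, by omega⟩
    · -- d odd: k - m ≡ d
      have htd : t = d := by simp only [ht, if_pos hpar]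
      have hℓge : d ≤ ℓ := htd ▸ htℓ
      set k : ℕ := (ℓ + d) / 2 with hk
      set m : ℕ := (ℓ - d) / 2 with hm
      have hkm : k + m = ℓ := by omega
      have hk2 : k = m + d := by omega
      have hZ : j = i + (k : ZMod τ) - (m : ZMod τ) := by
        rw [hk2]
        push_cast
        rw [hdcast]
        ring
      rw [← hfA a, ← hfB b]
      obtain ⟨ψ, hψ⟩ := psi_lift H A B σ hτ hcover hdisj hbip hσ hσinv hσBA w1 i j k m
        (by omega) hZ
      exact ⟨ψ, by omega⟩
  -- layer change along a Ψ-walk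
  have layer : ∀ {u v : ZMod τ × ↥A} (ψ : Ψ.Walk u v),
      ∃ k m : ℕ, k + m = ψ.length ∧ v.1 = u.1 + (k : ZMod τ) - (m : ZMod τ) := by
    intro u v ψ
    induction ψ with
    | nil => exact ⟨0, 0, rfl, by simp⟩
    | @cons u z v h p ih =>
      obtain ⟨k, m, hkm, hl⟩ := ih
      rcases h.1 with hfwd | hbwd
      · refine ⟨k + 1, m, by simp only [SimpleGraph.Walk.length_cons]; omega, ?_⟩
        rw [hl, hfwd]; push_cast; ring
      · refine ⟨k, m + 1, by simp only [SimpleGraph.Walk.length_cons]; omega, ?_⟩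
        have hz : z.1 = u.1 - 1 := by rw [hbwd]; ring
        rw [hl, hz]; push_cast; ring
  -- card of A
  have hcardA : Fintype.card ↥A = n := by
    rw [← Nat.card_eq_fintype_card, Nat.card_coe_set_eq, hA]
  refine ⟨ZMod τ × ↥A, inferInstance, Ψ, ?_, ?_, ?_, hwalks, ?_⟩
  · rw [Fintype.card_prod, ZMod.card, hcardA]
  · -- regularity
    rintro ⟨i, a⟩
    have hσaB : σ (a : W) ∈ B := hσAB _ a.2
    set S : Set W := {w : W | H.Adj (σ (a : W)) w} with hS
    have hSsub : S ⊆ A := by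
      intro w hw
      rcases hbip _ _ hw with ⟨h1, -⟩ | ⟨-, h2⟩
      · exact (hAB _ h1 hσaB).elim
      · exact h2
    set N : Set ↥A := Subtype.val ⁻¹' S with hN
    have hNcard : N.ncard = Δ := by
      have h1 : Subtype.val '' N = S := by
        rw [hN, Subtype.image_preimage_val]
        exact Set.inter_eq_right.mpr hSsub
      calc N.ncard = (Subtype.val '' N).ncard :=
            (Set.ncard_image_of_injective N Subtype.val_injective).symm
        _ = S.ncard := by rw [h1]
        _ = Δ := hreg _
    have hset : {w : ZMod τ × ↥A | Ψ.Adj (i, a) w} =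
        (fun b => ((i + 1 : ZMod τ), b)) '' N ∪ (fun b => ((i - 1 : ZMod τ), b)) '' N := by
      ext ⟨j, b⟩
      simp only [Set.mem_setOf_eq, Set.mem_union, Set.mem_image, hΨ,
        PsiGraph_adj H A σ hτ hσ hσinv]
      constructor
      · rintro ⟨hj | hj, hadj⟩
        · have hj1 : j = i + 1 := hj
          exact Or.inl ⟨b, hadj, by rw [hj1]⟩
        · have hj1 : i = j + 1 := hj
          refine Or.inr ⟨b, hadj, ?_⟩
          have hj' : j = i - 1 := by rw [hj1]; ring
          rw [hj']
      · rintro (⟨b', hb', heq⟩ | ⟨b', hb', heq⟩) <;>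
          obtain ⟨h1, h2⟩ := Prod.ext_iff.mp heq <;> cases h2
        · exact ⟨Or.inl (show (j, b).1 = (i, a).1 + 1 from h1.symm), hb'⟩
        · exact ⟨Or.inr (show (i, a).1 = (j, b).1 + 1 by rw [← h1]; ring), hb'⟩
    rw [hset]
    have hinj1 : Function.Injective (fun b : ↥A => ((i + 1 : ZMod τ), b)) := by
      intro x y hxy; exact (Prod.ext_iff.mp hxy).2
    have hinj2 : Function.Injective (fun b : ↥A => ((i - 1 : ZMod τ), b)) := by
      intro x y hxy; exact (Prod.ext_iff.mp hxy).2
    have hdisj2 : Disjoint ((fun b : ↥A => ((i + 1 : ZMod τ), b)) '' N)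
        ((fun b : ↥A => ((i - 1 : ZMod τ), b)) '' N) := by
      rw [Set.disjoint_left]
      rintro ⟨j, b⟩ ⟨b1, -, h1⟩ ⟨b2, -, h2⟩
      have e1 : i + 1 = j := (Prod.ext_iff.mp h1).1
      have e2 : i - 1 = j := (Prod.ext_iff.mp h2).1
      have e3 : i + 1 = i - 1 := e1.trans e2.symm
      have h2' : ((2 : ℕ) : ZMod τ) = 0 := by push_cast; linear_combination e3
      exact hcast 2 (by omega) (by omega) h2'
    rw [Set.ncard_union_eq hdisj2 (Set.toFinite _) (Set.toFinite _),
      Set.ncard_image_of_injective _ hinj1, Set.ncard_image_of_injective _ hinj2, hNcard]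
    omega
  · -- girth
    by_cases hτ3 : τ = 3
    · have hm : (min τ 4 : ℕ) = 3 := by omega
      rw [hm]
      exact_mod_cast Ψ.three_le_egirth
    · have hτ5 : 5 ≤ τ := by
        have := Nat.odd_iff.mp hτodd; omega
      have hm : (min τ 4 : ℕ) = 4 := by omega
      rw [hm, SimpleGraph.le_egirth]
      intro a w hw
      have h3 := hw.three_le_length
      have hne3 : w.length ≠ 3 := by
        intro hlen
        obtain ⟨k, m, hkm, hl⟩ := layer w
        have h0 : (k : ZMod τ) = (m : ZMod τ) := by linear_combination hl.symm
        have hmod : k ≡ m [MOD τ] := (ZMod.natCast_eq_natCast_iff k m τ).mp h0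
        have hmm : k % τ = m % τ := hmod
        rw [Nat.mod_eq_of_lt (by omega), Nat.mod_eq_of_lt (by omega)] at hmm
        omega
      exact_mod_cast (by omega : 4 ≤ w.length)
  · -- chromatic number
    have hcomplete : Ψ.power τ = ⊤ := by
      ext u v
      simp only [SimpleGraph.power, SimpleGraph.top_adj]
      constructor
      · rintro ⟨h, -⟩; exact h
      · intro h; exact ⟨h, hwalks u v h⟩
    rw [hcomplete, SimpleGraph.chromaticNumber_top, Fintype.card_prod, ZMod.card, hcardA]
end

section
/- For every real ε with 0 < ε < 1 and every integer N there exist an integer d ≥ N and a finite simple graph G of maximum degree at most d with χ(G³) ≥ (1 − ε)·3·d³/8. -/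
set_option linter.unusedSectionVars false

section Aux
variable {F : Type} [Field F]
def shf (p : F × F × F) : F × F × F := (p.2.2, p.1, p.2.1)
def twf (i : ZMod 3) : (F × F × F) → (F × F × F) := shf^[i.val]
def phf (t : F) : F × F × F := (t + t^2, t^2, t^2)
def cay (F : Type) [Field F] : SimpleGraph (ZMod 3 × (F × F × F)) where
  Adj u v := (v.1 = u.1 + 1 ∧ ∃ t, v.2 = u.2 + twf u.1 (phf t)) ∨
             (u.1 = v.1 + 1 ∧ ∃ t, u.2 = v.2 + twf v.1 (phf t))
  symm := by constructor; rintro u v (h | h); exacts [Or.inr h, Or.inl h]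
  loopless := by
    constructor
    rintro ⟨i, x⟩ (⟨h, -⟩ | ⟨h, -⟩) <;>
      exact (by decide : ∀ j : ZMod 3, ¬ (j = j + 1)) i h
lemma stepF (i : ZMod 3) (x : F × F × F) (t : F) :
    (cay F).Adj (i, x) (i + 1, x + twf i (phf t)) := Or.inl ⟨rfl, t, rfl⟩
lemma stepB (k : ZMod 3) (z y : F × F × F) (t : F) (hy : z = y + twf k (phf t)) :
    (cay F).Adj (k + 1, z) (k, y) := Or.inr ⟨rfl, t, hy⟩
lemma twf_add (i : ZMod 3) (p q : F × F × F) : twf i (p + q) = twf i p + twf i q := by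
  obtain h|h|h := (by decide : ∀ i : ZMod 3, i = 0 ∨ i = 1 ∨ i = 2) i <;> subst h <;> rfl
lemma twf_sub (i : ZMod 3) (p q : F × F × F) : twf i (p - q) = twf i p - twf i q := by
  obtain h|h|h := (by decide : ∀ i : ZMod 3, i = 0 ∨ i = 1 ∨ i = 2) i <;> subst h <;> rfl
lemma twf_neg (i : ZMod 3) (p : F × F × F) : twf i (-p) = - twf i p := by
  obtain h|h|h := (by decide : ∀ i : ZMod 3, i = 0 ∨ i = 1 ∨ i = 2) i <;> subst h <;> rfl
lemma twf_succ (i : ZMod 3) (p : F × F × F) : twf (i+1) p = twf i (shf p) := by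
  obtain h|h|h := (by decide : ∀ i : ZMod 3, i = 0 ∨ i = 1 ∨ i = 2) i <;> subst h <;> rfl
lemma twf_cancel (i : ZMod 3) (p : F × F × F) : twf i (twf (-i) p) = p := by
  obtain h|h|h := (by decide : ∀ i : ZMod 3, i = 0 ∨ i = 1 ∨ i = 2) i <;> subst h <;> rfl
/-- solver for same-level pairs (forward-forward-forward). -/
lemma solve0 (h3 : (3:F) = 0) (w : F × F × F) (hs : w.1 + w.2.1 + w.2.2 ≠ 1) :
    ∃ t1 t2 t3 : F, phf t1 + shf (phf t2) + shf (shf (phf t3)) = w := by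
  obtain ⟨w1, w2, w3⟩ := w
  simp only at hs
  have hden : (1 : F) + 2*(w1+w2+w3) ≠ 0 := by
    intro heq
    exact hs (by linear_combination (w1+w2+w3)*h3 - heq)
  set K := (w1^2+w2^2+w3^2) * ((1:F) + 2*(w1+w2+w3))⁻¹ with hKdef
  have hK : K * ((1:F) + 2*(w1+w2+w3)) = w1^2+w2^2+w3^2 := by
    rw [hKdef, mul_assoc, inv_mul_cancel₀ hden, mul_one]
  have hKK : (w1-K)^2 + (w2-K)^2 + (w3-K)^2 = K := by
    linear_combination K^2*h3 - hK
  refine ⟨w1 - K, w2 - K, w3 - K, ?_⟩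
  simp only [phf, shf, Prod.mk_add_mk, Prod.mk.injEq]
  refine ⟨?_, ?_, ?_⟩ <;> linear_combination hKK

/-- solver for adjacent-level pairs. -/
lemma solve1 (h3 : (3:F) = 0) (w : F × F × F) :
    (∃ t1 t2 t3 : F, phf t1 + shf (phf t2) - shf (phf t3) = w) ∨
    (∃ t1 t2 t3 : F, phf t1 - phf t2 + phf t3 = w) := by
  obtain ⟨w1, w2, w3⟩ := w
  by_cases hB : w2 - w3 = 0
  · right
    set A := w1 - w3 with hA
    set Cp := 2*w3 - 2*A^2 with hCp
    set u := 2*(Cp - 1) with hu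
    set yy := 2*(Cp + 1) with hyy
    set t2 := A + u with ht2
    set S := A + t2 with hS
    set t1 := 2*(S + yy) with ht1
    set t3 := 2*(S - yy) with ht3
    have hy : yy^2 - u^2 = Cp := by linear_combination (5*Cp)*h3
    have hE2 : t1^2 - t2^2 + t3^2 = w3 := by
      linear_combination 8*hy + (5*(t2^2 + w3))*h3
    have hE1 : t1 - t2 + t3 = A := by linear_combination (A + t2)*h3
    refine ⟨t1, t2, t3, ?_⟩
    simp only [phf, Prod.mk_add_mk, Prod.mk_sub_mk, Prod.mk.injEq]
    refine ⟨?_, ?_, ?_⟩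
    · linear_combination hE1 + hE2
    · linear_combination hE2 - hB
    · linear_combination hE2
  · left
    set A := w1 - w3 with hA
    set r := w3 - A^2 with hr
    set t1 := A with ht1
    set t3 := 2*(r*(w2-w3)⁻¹ - (w2-w3)) with ht3
    set t2 := (w2 - w3) + t3 with ht2
    have hBi : (w2-w3) * (w2-w3)⁻¹ = 1 := mul_inv_cancel₀ hB
    have s2 : t2^2 - t3^2 = r := by
      linear_combination (4*r)*hBi + (r - (w2-w3)^2)*h3
    refine ⟨t1, t2, t3, ?_⟩
    simp only [phf, shf, Prod.mk_add_mk, Prod.mk_sub_mk, Prod.mk.injEq]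
    refine ⟨?_, ?_, ?_⟩ <;> linear_combination s2

/-- same-level walk, forward version -/
lemma fffwalk (h3 : (3:F) = 0) (i : ZMod 3) (x y : F × F × F)
    (hs : (twf (-i) (y - x)).1 + (twf (-i) (y - x)).2.1 + (twf (-i) (y - x)).2.2 ≠ 1) :
    ∃ p : (cay F).Walk (i, x) (i, y), p.length = 3 := by
  obtain ⟨t1, t2, t3, hE⟩ := solve0 h3 _ hs
  have hv : ((i : ZMod 3), y) =
      (i + 1 + 1 + 1, x + twf i (phf t1) + twf (i+1) (phf t2) + twf (i+1+1) (phf t3)) := by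
    have h1 : (i : ZMod 3) = i + 1 + 1 + 1 := (by decide : ∀ j : ZMod 3, j = j+1+1+1) i
    have h2 : x + twf i (phf t1) + twf (i+1) (phf t2) + twf (i+1+1) (phf t3) = y := by
      have hC := congrArg (twf i) hE
      rw [twf_cancel, twf_add, twf_add] at hC
      rw [twf_succ, show (i+1+1 : ZMod 3) = (i+1)+1 from rfl, twf_succ, twf_succ]
      have := hC
      linear_combination (norm := abel) this
    exact Prod.ext h1 h2.symm
  rw [hv]
  exact ⟨SimpleGraph.Walk.cons (stepF i x t1)
          (SimpleGraph.Walk.cons (stepF (i+1) _ t2)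
            (SimpleGraph.Walk.cons (stepF (i+1+1) _ t3) SimpleGraph.Walk.nil)), rfl⟩
end Aux

section Aux2
variable {F : Type} [Field F]

/-- adjacent-level walk -/
lemma adjwalk (h3 : (3:F) = 0) (i : ZMod 3) (x y : F × F × F) :
    ∃ p : (cay F).Walk (i, x) (i + 1, y), p.length = 3 := by
  set w := twf (-i) (y - x) with hw
  have hkey : x + twf i w = y := by rw [hw, twf_cancel]; exact add_sub_cancel x y
  rcases solve1 h3 w with ⟨t1, t2, t3, hE⟩ | ⟨t1, t2, t3, hE⟩
  · -- pattern F F B : (i,x) → (i+1, x1) → (i+1+1, x2) → (i+1, y)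
    have hC := congrArg (twf i) hE
    rw [twf_cancel, twf_sub, twf_add] at hC
    have hb : x + twf i (phf t1) + twf (i+1) (phf t2) = y + twf (i+1) (phf t3) := by
      rw [twf_succ, twf_succ]
      linear_combination (norm := abel) hC
    exact ⟨SimpleGraph.Walk.cons (stepF i x t1)
      (SimpleGraph.Walk.cons (stepF (i+1) _ t2)
        (SimpleGraph.Walk.cons (stepB (i+1) _ y t3 hb) SimpleGraph.Walk.nil)), rfl⟩
  · -- pattern F B F : (i,x) → (i+1, x1) → (i, x2) → (i+1, y)
    have hC := congrArg (twf i) hE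
    rw [twf_cancel, twf_add, twf_sub] at hC
    have hb : x + twf i (phf t1) = (x + twf i (phf t1) - twf i (phf t2)) + twf i (phf t2) := by
      abel
    have h2 : (i + 1, y) = ((i : ZMod 3) + 1,
        x + twf i (phf t1) - twf i (phf t2) + twf i (phf t3)) := by
      refine Prod.ext rfl ?_
      show y = _
      rw [sub_eq_iff_eq_add'.mp hC.symm]
      abel
    rw [h2]
    exact ⟨SimpleGraph.Walk.cons (stepF i x t1)
      (SimpleGraph.Walk.cons (stepB i _ (x + twf i (phf t1) - twf i (phf t2)) t2 hb)
        (SimpleGraph.Walk.cons (stepF i _ t3) SimpleGraph.Walk.nil)), rfl⟩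
end Aux2

section Aux3
variable {F : Type} [Field F]

lemma walk3 (h3 : (3:F) = 0) (u v : ZMod 3 × (F × F × F)) :
    ∃ p : (cay F).Walk u v, p.length = 3 := by
  obtain ⟨i, x⟩ := u
  obtain ⟨j, y⟩ := v
  rcases (by decide : ∀ a b : ZMod 3, b = a ∨ b = a + 1 ∨ a = b + 1) i j with hc | hc | hc
  · -- same level
    subst hc
    by_cases hs : (twf (-j) (y - x)).1 + (twf (-j) (y - x)).2.1 + (twf (-j) (y - x)).2.2 = 1
    · -- use reversed fff-walk from (j,y) to (j,x)
      have hs' : (twf (-j) (x - y)).1 + (twf (-j) (x - y)).2.1 + (twf (-j) (x - y)).2.2 ≠ 1 := by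
        have hneg : twf (-j) (x - y) = - twf (-j) (y - x) := by
          rw [← twf_neg, neg_sub]
        rw [hneg]
        simp only [Prod.fst_neg, Prod.snd_neg]
        intro h
        refine one_ne_zero (α := F) ?_
        linear_combination h + hs + h3
      obtain ⟨p, hp⟩ := fffwalk h3 j y x hs'
      exact ⟨p.reverse, by simpa using hp⟩
    · exact fffwalk h3 j x y hs
  · -- j = i + 1
    subst hc
    exact adjwalk h3 i x y
  · -- i = j + 1
    subst hc
    obtain ⟨p, hp⟩ := adjwalk h3 j y x
    exact ⟨p.reverse, by simpa using hp⟩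

lemma power3_eq_top (h3 : (3:F) = 0) : (cay F).power 3 = ⊤ := by
  ext u v
  constructor
  · rintro ⟨h, -⟩
    exact h
  · intro h
    have hne : u ≠ v := by simpa using h
    obtain ⟨p, hp⟩ := walk3 h3 u v
    exact ⟨hne, p, by omega⟩

end Aux3

section Aux4
variable {F : Type} [Field F] [Finite F]

lemma degree_le (v : ZMod 3 × (F × F × F)) :
    {w | (cay F).Adj v w}.ncard ≤ 2 * Nat.card F := by
  obtain ⟨i, x⟩ := v
  have hsub : {w | (cay F).Adj (i, x) w} ⊆
      Set.range (fun t : F => ((i + 1 : ZMod 3), x + twf i (phf t))) ∪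
      Set.range (fun t : F => ((i - 1 : ZMod 3), x - twf (i - 1) (phf t))) := by
    rintro ⟨j, y⟩ (⟨h1, t, h2⟩ | ⟨h1, t, h2⟩)
    · left
      exact ⟨t, by simp only at h1 h2; rw [Prod.mk.injEq]; exact ⟨h1.symm, h2.symm⟩⟩
    · right
      refine ⟨t, ?_⟩
      simp only at h1 h2
      have hj : j = i - 1 := by rw [h1]; ring
      subst hj
      rw [Prod.mk.injEq]
      exact ⟨rfl, by rw [h2]; abel⟩
  calc {w | (cay F).Adj (i, x) w}.ncard
      ≤ (Set.range (fun t : F => ((i + 1 : ZMod 3), x + twf i (phf t))) ∪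
         Set.range (fun t : F => ((i - 1 : ZMod 3), x - twf (i - 1) (phf t)))).ncard :=
        Set.ncard_le_ncard hsub (Set.finite_union.mpr ⟨Set.finite_range _, Set.finite_range _⟩)
    _ ≤ (Set.range (fun t : F => ((i + 1 : ZMod 3), x + twf i (phf t)))).ncard +
        (Set.range (fun t : F => ((i - 1 : ZMod 3), x - twf (i - 1) (phf t)))).ncard :=
        Set.ncard_union_le _ _
    _ ≤ Nat.card F + Nat.card F := by
        gcongr <;>
        · rw [← Set.image_univ]
          exact le_trans (Set.ncard_image_le Set.finite_univ) (le_of_eq (Set.ncard_univ F))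
    _ = 2 * Nat.card F := by ring

end Aux4

/-- `χ³₃(d) ≳ 3·d³/8` for infinitely many `d`. -/
theorem cube_lower_infinitely_many (ε : ℝ) (hε0 : 0 < ε) (hε1 : ε < 1) (N : ℕ) :
    ∃ d : ℕ, N ≤ d ∧
      ∃ (V : Type) (_ : Fintype V) (G : SimpleGraph V),
        (∀ v : V, {w : V | G.Adj v w}.ncard ≤ d) ∧
        (1 - ε) * 3 * (d : ℝ) ^ 3 / 8 ≤ ((G.power 3).chromaticNumber.toNat : ℝ) := by
  haveI : Fact (Nat.Prime 3) := ⟨by norm_num⟩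
  set F := GaloisField 3 (N + 1) with hF
  haveI : Fintype F := Fintype.ofFinite F
  set q : ℕ := 3 ^ (N + 1) with hq
  have hcardF : Nat.card F = q := GaloisField.card 3 (N + 1) (Nat.succ_ne_zero N)
  have h3 : (3 : F) = 0 := by
    have := CharP.cast_eq_zero F 3
    exact_mod_cast this
  refine ⟨2 * q, ?_, ZMod 3 × (F × F × F), inferInstance, cay F, ?_, ?_⟩
  · -- N ≤ 2q
    have h1 : N < 3 ^ N := Nat.lt_pow_self (by norm_num)
    have h2 : 3 ^ N ≤ 3 ^ (N + 1) := Nat.pow_le_pow_right (by norm_num) (Nat.le_succ N)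
    omega
  · intro v
    have := degree_le (F := F) v
    rwa [hcardF] at this
  · -- chromatic bound
    have htop : ((cay F).power 3) = ⊤ := power3_eq_top h3
    have hcardV : Fintype.card (ZMod 3 × (F × F × F)) = 3 * q ^ 3 := by
      rw [Fintype.card_prod, Fintype.card_prod, Fintype.card_prod, ZMod.card]
      have : Fintype.card F = q := by rw [← Nat.card_eq_fintype_card, hcardF]
      rw [this]; ring
    have hchrom : ((cay F).power 3).chromaticNumber.toNat = 3 * q ^ 3 := by
      rw [htop, SimpleGraph.chromaticNumber_top, hcardV]
      rfl
    rw [hchrom]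
    have hqpos : (0:ℝ) < (q : ℝ) := by positivity
    push_cast
    nlinarith [pow_pos hqpos 3, mul_pos hε0 (pow_pos hqpos 3)]
end

section
/- For every real ε with 0 < ε < 1 there exists an integer d₀ such that for every integer d ≥ d₀ there is a finite simple bipartite graph G of maximum degree at most d and girth at least 4 with χ(G⁴) ≥ (1 − ε)·d⁴/8. -/
namespace PowerLB

/-! ### Affine lines over a field -/

/-- Lines in the affine plane over `K`: `inl (s, c)` is `y = s*x + c`, `inr c` is `x = c`. -/
def Line (K : Type) : Type := (K × K) ⊕ K

instance (K : Type) [Fintype K] [DecidableEq K] : Fintype (Line K) := by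
  unfold Line; infer_instance

def onLine {K : Type} [Field K] (l : Line K) (pt : K × K) : Prop :=
  match l with
  | .inl sc => pt.2 = sc.1 * pt.1 + sc.2
  | .inr c => pt.1 = c

def lineThrough {K : Type} [Field K] [DecidableEq K] (pt pt' : K × K) : Line K :=
  if pt.1 = pt'.1 then .inr pt.1
  else .inl ((pt.2 - pt'.2) / (pt.1 - pt'.1),
             pt.2 - (pt.2 - pt'.2) / (pt.1 - pt'.1) * pt.1)

lemma onLine_lineThrough_left {K : Type} [Field K] [DecidableEq K] (pt pt' : K × K) :
    onLine (lineThrough pt pt') pt := by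
  rcases em (pt.1 = pt'.1) with h | h <;> [rw [show lineThrough pt pt' = .inr pt.1 from if_pos h]; rw [show lineThrough pt pt' = .inl _ from if_neg h]]
  · rfl
  · show pt.2 = _ * pt.1 + (pt.2 - _ * pt.1)
    ring

lemma onLine_lineThrough_right {K : Type} [Field K] [DecidableEq K] (pt pt' : K × K) :
    onLine (lineThrough pt pt') pt' := by
  rcases em (pt.1 = pt'.1) with h | h <;> [rw [show lineThrough pt pt' = .inr pt.1 from if_pos h]; rw [show lineThrough pt pt' = .inl _ from if_neg h]]
  · exact (by assumption : pt.1 = pt'.1).symm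
  · show pt'.2 = (pt.2 - pt'.2) / (pt.1 - pt'.1) * pt'.1 + (pt.2 - (pt.2 - pt'.2) / (pt.1 - pt'.1) * pt.1)
    have h : pt.1 - pt'.1 ≠ 0 := sub_ne_zero.mpr (by assumption)
    field_simp
    ring

def slopeOf {K : Type} : Line K → Option K
  | .inl sc => some sc.1
  | .inr _ => none

lemma line_eq_of_slope {K : Type} [Field K] {l l' : Line K} {pt : K × K}
    (h : onLine l pt) (h' : onLine l' pt) (hs : slopeOf l = slopeOf l') : l = l' := by
  cases l with
  | inl sc =>
    cases l' with
    | inl sc' =>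
      simp only [slopeOf, Option.some.injEq] at hs
      have h1 : pt.2 = sc.1 * pt.1 + sc.2 := h
      have h2 : pt.2 = sc'.1 * pt.1 + sc'.2 := h'
      have hc : sc.2 = sc'.2 := by
        have h3 := h1.symm.trans h2
        rw [hs] at h3
        exact add_left_cancel h3
      rw [show sc = (sc.1, sc.2) from rfl, show sc' = (sc'.1, sc'.2) from rfl, hs, hc]
    | inr c' => simp [slopeOf] at hs
  | inr c =>
    cases l' with
    | inl sc' => simp [slopeOf] at hs
    | inr c' =>
      have h1 : pt.1 = c := h
      have h2 : pt.1 = c' := h'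
      rw [← h1, h2]

def projOf {K : Type} : Line K → (K × K) → K
  | .inl _, pt => pt.1
  | .inr _, pt => pt.2

lemma pt_eq_of_proj {K : Type} [Field K] {l : Line K} {pt pt' : K × K}
    (h : onLine l pt) (h' : onLine l pt') (hp : projOf l pt = projOf l pt') : pt = pt' := by
  cases l with
  | inl sc =>
    have h1 : pt.2 = sc.1 * pt.1 + sc.2 := h
    have h2 : pt'.2 = sc.1 * pt'.1 + sc.2 := h'
    have hp1 : pt.1 = pt'.1 := hp
    exact Prod.ext hp1 (by rw [h1, h2, hp1])
  | inr c =>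
    have h1 : pt.1 = c := h
    have h2 : pt'.1 = c := h'
    have hp2 : pt.2 = pt'.2 := hp
    exact Prod.ext (h1.trans h2.symm) hp2

/-! ### The graph -/

section TwoFields

variable (K1 K2 : Type) [Field K1] [Field K2]

/-- "Point" type: a point of `AG(2,K1) × AG(2,K2)` together with a copy index. -/
abbrev Pt : Type := (K1 × K1) × (K2 × K2) × Fin 2

/-- "Block" type: a pair of lines. -/
abbrev Hub : Type := Line K1 × Line K2

/-- Vertices: `S`-vertices are pairs of points; hubs of the two coordinate systems. -/
abbrev Vtx : Type := (Pt K1 K2 × Pt K1 K2) ⊕ ((Hub K1 K2 × Pt K1 K2) ⊕ (Pt K1 K2 × Hub K1 K2))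

/-- Oriented edge relation: `S`-vertex to hub. -/
def E : Vtx K1 K2 → Vtx K1 K2 → Prop
  | .inl u, .inr (.inl h) => h.2 = u.2 ∧ onLine h.1.1 u.1.1 ∧ onLine h.1.2 u.1.2.1
  | .inl u, .inr (.inr h) => h.1 = u.1 ∧ onLine h.2.1 u.2.1 ∧ onLine h.2.2 u.2.2.1
  | _, _ => False

def Gr : SimpleGraph (Vtx K1 K2) where
  Adj x y := E K1 K2 x y ∨ E K1 K2 y x
  symm := ⟨fun _ _ h => h.symm⟩
  loopless := by
    constructor
    rintro (u | (h | h)) (hx | hx) <;> exact hx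

variable {K1 K2}

lemma not_E_to_inl (w : Vtx K1 K2) (u : Pt K1 K2 × Pt K1 K2) : ¬ E K1 K2 w (.inl u) := by
  rcases w with u' | (h | h) <;> exact fun hx => hx

lemma not_E_from_inr (w : Vtx K1 K2) (h : (Hub K1 K2 × Pt K1 K2) ⊕ (Pt K1 K2 × Hub K1 K2)) :
    ¬ E K1 K2 (.inr h) w := by
  rcases h with h | h <;> rcases w with u | (h' | h') <;> exact fun hx => hx

/-! ### Degree bound -/

lemma Gr_adj {x y : Vtx K1 K2} :
    (Gr K1 K2).Adj x y ↔ E K1 K2 x y ∨ E K1 K2 y x := Iff.rfl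

lemma adj_inl_shape {u : Pt K1 K2 × Pt K1 K2} {w : Vtx K1 K2}
    (hw : (Gr K1 K2).Adj (.inl u) w) : E K1 K2 (.inl u) w := by
  rcases Gr_adj.mp hw with h | h
  · exact h
  · exact (not_E_to_inl _ _ h).elim

lemma adj_inr_shape {hb : (Hub K1 K2 × Pt K1 K2) ⊕ (Pt K1 K2 × Hub K1 K2)} {w : Vtx K1 K2}
    (hw : (Gr K1 K2).Adj (.inr hb) w) : E K1 K2 w (.inr hb) := by
  rcases Gr_adj.mp hw with h | h
  · exact (not_E_from_inr _ _ h).elim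
  · exact h

section Deg

variable [Fintype K1] [Fintype K2]

lemma deg_le (v : Vtx K1 K2) :
    {w : Vtx K1 K2 | (Gr K1 K2).Adj v w}.ncard
      ≤ 2 * ((Fintype.card K1 + 1) * (Fintype.card K2 + 1)) := by
  classical
  rcases v with u | (hb | hb)
  · -- S-vertex
    let Φ : Vtx K1 K2 → (Option K1 × Option K2) ⊕ (Option K1 × Option K2) :=
      fun w => match w with
      | .inr (.inl h) => .inl (slopeOf h.1.1, slopeOf h.1.2)
      | .inr (.inr h) => .inr (slopeOf h.2.1, slopeOf h.2.2)
      | _ => .inl (none, none)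
    have hinj : Set.InjOn Φ {w : Vtx K1 K2 | (Gr K1 K2).Adj (.inl u) w} := by
      intro w hw w' hw' heq
      have ew := adj_inl_shape hw
      have ew' := adj_inl_shape hw'
      clear hw hw'
      rcases w with w | (w | w)
      · exact (show False from ew).elim
      · rcases w' with w' | (w' | w')
        · exact (show False from ew').elim
        · obtain ⟨hg, hl1, hl2⟩ := ew
          obtain ⟨hg', hl1', hl2'⟩ := ew'
          simp only [Φ, Sum.inl.injEq, Prod.mk.injEq] at heq
          have e1 : w.1.1 = w'.1.1 := line_eq_of_slope hl1 hl1' heq.1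
          have e2 : w.1.2 = w'.1.2 := line_eq_of_slope hl2 hl2' heq.2
          rw [Sum.inr.injEq, Sum.inl.injEq]
          exact Prod.ext (Prod.ext e1 e2) (hg.trans hg'.symm)
        · exact absurd heq (by simp [Φ])
      · rcases w' with w' | (w' | w')
        · exact (show False from ew').elim
        · exact absurd heq (by simp [Φ])
        · obtain ⟨hf, hl1, hl2⟩ := ew
          obtain ⟨hf', hl1', hl2'⟩ := ew'
          simp only [Φ, Sum.inr.injEq, Prod.mk.injEq] at heq
          have e1 : w.2.1 = w'.2.1 := line_eq_of_slope hl1 hl1' heq.1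
          have e2 : w.2.2 = w'.2.2 := line_eq_of_slope hl2 hl2' heq.2
          rw [Sum.inr.injEq, Sum.inr.injEq]
          exact Prod.ext (hf.trans hf'.symm) (Prod.ext e1 e2)
    have hle := Set.ncard_le_ncard_of_injOn Φ (fun a _ => Set.mem_univ (Φ a)) hinj
      Set.finite_univ
    rw [Set.ncard_univ, Nat.card_eq_fintype_card] at hle
    refine hle.trans (le_of_eq ?_)
    simp only [Fintype.card_sum, Fintype.card_prod, Fintype.card_option]
    ring
  · -- hub1 vertex
    let Φ : Vtx K1 K2 → K1 × K2 × Fin 2 :=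
      fun w => match w with
      | .inl u => (projOf hb.1.1 u.1.1, projOf hb.1.2 u.1.2.1, u.1.2.2)
      | _ => (0, 0, 0)
    have hinj : Set.InjOn Φ {w : Vtx K1 K2 | (Gr K1 K2).Adj (.inr (.inl hb)) w} := by
      intro w hw w' hw' heq
      have ew := adj_inr_shape hw
      have ew' := adj_inr_shape hw'
      clear hw hw'
      rcases w with w | (w | w)
      · rcases w' with w' | (w' | w')
        · obtain ⟨hg, hl1, hl2⟩ := ew
          obtain ⟨hg', hl1', hl2'⟩ := ew'
          simp only [Φ, Prod.mk.injEq] at heq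
          have e1 : w.1.1 = w'.1.1 := pt_eq_of_proj hl1 hl1' heq.1
          have e2 : w.1.2.1 = w'.1.2.1 := pt_eq_of_proj hl2 hl2' heq.2.1
          rw [Sum.inl.injEq]
          exact Prod.ext (Prod.ext e1 (Prod.ext e2 heq.2.2)) (hg.symm.trans hg')
        · exact (show False from ew').elim
        · exact (show False from ew').elim
      · exact (show False from ew).elim
      · exact (show False from ew).elim
    have hle := Set.ncard_le_ncard_of_injOn Φ (fun a _ => Set.mem_univ (Φ a)) hinj
      Set.finite_univ
    rw [Set.ncard_univ, Nat.card_eq_fintype_card] at hle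
    refine hle.trans ?_
    simp only [Fintype.card_prod, Fintype.card_fin]
    nlinarith [Fintype.card K1, Fintype.card K2]
  · -- hub2 vertex
    let Φ : Vtx K1 K2 → K1 × K2 × Fin 2 :=
      fun w => match w with
      | .inl u => (projOf hb.2.1 u.2.1, projOf hb.2.2 u.2.2.1, u.2.2.2)
      | _ => (0, 0, 0)
    have hinj : Set.InjOn Φ {w : Vtx K1 K2 | (Gr K1 K2).Adj (.inr (.inr hb)) w} := by
      intro w hw w' hw' heq
      have ew := adj_inr_shape hw
      have ew' := adj_inr_shape hw'
      clear hw hw'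
      rcases w with w | (w | w)
      · rcases w' with w' | (w' | w')
        · obtain ⟨hf, hl1, hl2⟩ := ew
          obtain ⟨hf', hl1', hl2'⟩ := ew'
          simp only [Φ, Prod.mk.injEq] at heq
          have e1 : w.2.1 = w'.2.1 := pt_eq_of_proj hl1 hl1' heq.1
          have e2 : w.2.2.1 = w'.2.2.1 := pt_eq_of_proj hl2 hl2' heq.2.1
          rw [Sum.inl.injEq]
          exact Prod.ext (hf.symm.trans hf') (Prod.ext e1 (Prod.ext e2 heq.2.2))
        · exact (show False from ew').elim
        · exact (show False from ew').elim
      · exact (show False from ew).elim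
      · exact (show False from ew).elim
    have hle := Set.ncard_le_ncard_of_injOn Φ (fun a _ => Set.mem_univ (Φ a)) hinj
      Set.finite_univ
    rw [Set.ncard_univ, Nat.card_eq_fintype_card] at hle
    refine hle.trans ?_
    simp only [Fintype.card_prod, Fintype.card_fin]
    nlinarith [Fintype.card K1, Fintype.card K2]

end Deg

/-! ### Two-coloring -/

variable (K1 K2)

def twoColoring : (Gr K1 K2).Coloring (Fin 2) :=
  SimpleGraph.Coloring.mk
    (fun x => match x with | .inl _ => 0 | .inr _ => 1)
    (by
      intro x y hadj
      rcases x with u | a <;> rcases y with u' | b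
      · exact absurd hadj (by rintro (h | h) <;> exact (show False from h))
      · simp
      · simp
      · exact absurd hadj (by
          rintro (h | h)
          exacts [not_E_from_inr _ _ h, not_E_from_inr _ _ h]))

/-! ### Clique in the fourth power -/

section Clique

variable {K1 K2} [DecidableEq K1] [DecidableEq K2]

lemma power_adj (u v : Pt K1 K2 × Pt K1 K2) (hne : u ≠ v) :
    ((Gr K1 K2).power 4).Adj (.inl u) (.inl v) := by
  refine ⟨fun h => hne (Sum.inl_injective h), ?_⟩
  obtain ⟨f, g⟩ := u
  obtain ⟨f', g'⟩ := v
  by_cases hf : f = f'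
  · subst hf
    have e1 : (Gr K1 K2).Adj (.inl (f, g))
        (.inr (.inr (f, (lineThrough g.1 g'.1, lineThrough g.2.1 g'.2.1)))) :=
      Or.inl ⟨rfl, onLine_lineThrough_left _ _, onLine_lineThrough_left _ _⟩
    have e2 : (Gr K1 K2).Adj
        (.inr (.inr (f, (lineThrough g.1 g'.1, lineThrough g.2.1 g'.2.1)))) (.inl (f, g')) :=
      Or.inr ⟨rfl, onLine_lineThrough_right _ _, onLine_lineThrough_right _ _⟩
    exact ⟨SimpleGraph.Walk.cons e1 (SimpleGraph.Walk.cons e2 SimpleGraph.Walk.nil), by simp⟩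
  · have e1 : (Gr K1 K2).Adj (.inl (f, g))
        (.inr (.inl ((lineThrough f.1 f'.1, lineThrough f.2.1 f'.2.1), g))) :=
      Or.inl ⟨rfl, onLine_lineThrough_left _ _, onLine_lineThrough_left _ _⟩
    have e2 : (Gr K1 K2).Adj
        (.inr (.inl ((lineThrough f.1 f'.1, lineThrough f.2.1 f'.2.1), g))) (.inl (f', g)) :=
      Or.inr ⟨rfl, onLine_lineThrough_right _ _, onLine_lineThrough_right _ _⟩
    have e3 : (Gr K1 K2).Adj (.inl (f', g))
        (.inr (.inr (f', (lineThrough g.1 g'.1, lineThrough g.2.1 g'.2.1)))) :=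
      Or.inl ⟨rfl, onLine_lineThrough_left _ _, onLine_lineThrough_left _ _⟩
    have e4 : (Gr K1 K2).Adj
        (.inr (.inr (f', (lineThrough g.1 g'.1, lineThrough g.2.1 g'.2.1)))) (.inl (f', g')) :=
      Or.inr ⟨rfl, onLine_lineThrough_right _ _, onLine_lineThrough_right _ _⟩
    exact ⟨SimpleGraph.Walk.cons e1 (SimpleGraph.Walk.cons e2 (SimpleGraph.Walk.cons e3
      (SimpleGraph.Walk.cons e4 SimpleGraph.Walk.nil))), by simp⟩

end Clique

end TwoFields

/-! ### Generic lemmas: parity, girth, clique vs chromatic number -/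

lemma coloring_walk_parity {V : Type} {G : SimpleGraph V} (c : G.Coloring (Fin 2))
    {u v : V} (p : G.Walk u v) : c u = c v ↔ Even p.length := by
  induction p with
  | nil => simp
  | @cons a b w h q ih =>
    have hne : c a ≠ c b := c.valid h
    have key : ∀ x y z : Fin 2, x ≠ y → ((x = z) ↔ ¬(y = z)) := by decide
    simp only [SimpleGraph.Walk.length_cons]
    exact (key _ _ _ hne).trans ((not_congr ih).trans (Nat.even_add_one).symm)

lemma four_le_egirth_of_two_colorable {V : Type} {G : SimpleGraph V}
    (hc : G.Colorable 2) : 4 ≤ G.egirth := by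
  rw [SimpleGraph.le_egirth]
  intro a w hw
  obtain ⟨c⟩ := hc
  have he : Even w.length := (coloring_walk_parity c w).mp rfl
  have h3 : 3 ≤ w.length := hw.three_le_length
  have h4 : 4 ≤ w.length := by
    obtain ⟨k, hk⟩ := he
    omega
  exact_mod_cast Nat.cast_le.mpr h4

lemma clique_card_le_chromatic {V : Type} [Fintype V] (H : SimpleGraph V) (S : Finset V)
    (hS : ∀ u ∈ S, ∀ v ∈ S, u ≠ v → H.Adj u v) :
    S.card ≤ H.chromaticNumber.toNat := by
  classical
  obtain ⟨c⟩ := SimpleGraph.colorable_chromaticNumber H.colorable_of_fintype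
  have hinj : Set.InjOn c S := by
    intro x hx y hy hcxy
    by_contra hne
    exact c.valid (hS x (by simpa using hx) y (by simpa using hy) hne) hcxy
  have h := Finset.card_le_card_of_injOn (s := S) (t := Finset.univ) c
    (fun a _ => Finset.mem_univ (c a)) hinj
  simpa using h

/-! ### The construction, assembled -/

lemma construction (p a d : ℕ) (hp : p.Prime) (ha : 0 < a)
    (h1 : 2 * ((p + 1) * (2 ^ a + 1)) ≤ d) (h2 : 100 * d ≤ 237 * (p * 2 ^ a)) :
    ∃ (V : Type) (_ : Fintype V) (G : SimpleGraph V),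
      (∀ v : V, {w : V | G.Adj v w}.ncard ≤ d) ∧
      G.Colorable 2 ∧
      4 ≤ G.egirth ∧
      d ^ 4 ≤ 8 * (G.power 4).chromaticNumber.toNat := by
  classical
  haveI : Fact p.Prime := ⟨hp⟩
  let K1 := ZMod p
  let K2 := GaloisField 2 a
  haveI : Fintype K2 := Fintype.ofFinite _
  have hcard1 : Fintype.card K1 = p := ZMod.card p
  have hcard2 : Fintype.card K2 = 2 ^ a := by
    rw [← Nat.card_eq_fintype_card]
    exact GaloisField.card 2 a ha.ne'
  refine ⟨Vtx K1 K2, inferInstance, Gr K1 K2, ?_, ⟨twoColoring K1 K2⟩, ?_, ?_⟩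
  · intro v
    refine (deg_le v).trans ?_
    rw [hcard1, hcard2]
    exact h1
  · exact four_le_egirth_of_two_colorable ⟨twoColoring K1 K2⟩
  · set H := (Gr K1 K2).power 4 with hH
    let S : Finset (Vtx K1 K2) := Finset.univ.map ⟨Sum.inl, Sum.inl_injective⟩
    have hclique : ∀ x ∈ S, ∀ y ∈ S, x ≠ y → H.Adj x y := by
      intro x hx y hy hne
      obtain ⟨u, -, rfl⟩ := Finset.mem_map.mp hx
      obtain ⟨v, -, rfl⟩ := Finset.mem_map.mp hy
      exact power_adj u v (fun h => hne (congrArg Sum.inl h))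
    have hcount : S.card ≤ H.chromaticNumber.toNat :=
      clique_card_le_chromatic H S hclique
    have hScard : S.card = 4 * (p * 2 ^ a) ^ 4 := by
      rw [Finset.card_map, Finset.card_univ]
      simp only [Fintype.card_prod, Fintype.card_fin, hcard1, hcard2]
      ring
    have hnum : d ^ 4 ≤ 8 * S.card := by
      rw [hScard]
      have hX : (100 * d) ^ 4 ≤ (237 * (p * 2 ^ a)) ^ 4 := Nat.pow_le_pow_left h2 4
      have key : ∀ A B : ℕ, (100 * A) ^ 4 ≤ (237 * B) ^ 4 → A ^ 4 ≤ 8 * (4 * B ^ 4) := by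
        intro A B h
        rw [mul_pow, mul_pow] at h
        norm_num at h ⊢
        omega
      exact key d (p * 2 ^ a) hX
    exact hnum.trans (Nat.mul_le_mul_left 8 hcount)

end PowerLB




set_option maxRecDepth 10000

/-- `χ⁴₄(d) ≳ 2·d⁴/16 = d⁴/8` as `d → ∞`, with bipartite witnesses. -/
theorem fourth_power_girth_four_lower (ε : ℝ) (hε0 : 0 < ε) (hε1 : ε < 1) :
    ∃ d₀ : ℕ, ∀ d : ℕ, d₀ ≤ d →
      ∃ (V : Type) (_ : Fintype V) (G : SimpleGraph V),
        (∀ v : V, {w : V | G.Adj v w}.ncard ≤ d) ∧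
        G.Colorable 2 ∧
        4 ≤ G.egirth ∧
        (1 - ε) * (d : ℝ) ^ 4 / 8 ≤ ((G.power 4).chromaticNumber.toNat : ℝ) := by
  classical
  refine ⟨270600, fun d hd => ?_⟩
  -- choose the power of two
  set Pp : ℕ → Prop := fun n => 264 * (2 ^ n + 1) ≤ d with hPp
  have : DecidablePred Pp := fun n => by unfold Pp; infer_instance
  set a := Nat.findGreatest Pp d with haDef
  have h10 : 10 ≤ a := Nat.le_findGreatest (by omega) (by
    show 264 * (2 ^ 10 + 1) ≤ d
    norm_num
    omega)
  have hPa : Pp a := Nat.findGreatest_of_ne_zero haDef.symm (by omega)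
  have hale : a ≤ d := Nat.findGreatest_le d
  have had : a < d := by
    rcases eq_or_lt_of_le hale with h | h
    · exfalso
      have h2d : d < 2 ^ d := Nat.lt_two_pow_self
      have hPa' := hPa
      rw [hPp] at hPa'
      have hpow : (2:ℕ) ^ a = 2 ^ d := by rw [h]
      omega
    · exact h
  have hnot : ¬ Pp (a + 1) :=
    Nat.findGreatest_is_greatest (P := Pp) (n := d) (by omega) (by omega)
  simp only [hPp] at hPa hnot
  -- rewrite powers of two
  set B := 2 ^ (a - 10) with hBdef
  have hB : 2 ^ a = 1024 * B := by
    have hh : 2 ^ (a - 10) * 2 ^ 10 = 2 ^ a := by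
      rw [← pow_add, Nat.sub_add_cancel h10]
    rw [← hh, hBdef]
    ring
  have hB1 : 1 ≤ B := Nat.one_le_two_pow
  have hub : d < 264 * (2 ^ a * 2 + 1) := by
    rw [pow_succ] at hnot
    omega
  -- choose the prime
  obtain ⟨p, hp, h1, h2⟩ :
      ∃ p : ℕ, p.Prime ∧ 2 * ((p + 1) * (2 ^ a + 1)) ≤ d ∧ 100 * d ≤ 237 * (p * 2 ^ a) := by
    rcases le_or_gt (504 * (2 ^ a + 1)) d with h | h
    · exact ⟨251, by norm_num, by omega, by omega⟩
    rcases le_or_gt (460 * (2 ^ a + 1)) d with h' | h'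
    · exact ⟨229, by norm_num, by omega, by omega⟩
    rcases le_or_gt (400 * (2 ^ a + 1)) d with h'' | h''
    · exact ⟨199, by norm_num, by omega, by omega⟩
    rcases le_or_gt (348 * (2 ^ a + 1)) d with h3 | h3
    · exact ⟨173, by norm_num, by omega, by omega⟩
    rcases le_or_gt (300 * (2 ^ a + 1)) d with h4 | h4
    · exact ⟨149, by norm_num, by omega, by omega⟩
    · exact ⟨131, by norm_num, by omega, by omega⟩
  obtain ⟨V, hV, G, hdeg, hcol, hgirth, hchrom⟩ :=
    PowerLB.construction p a d hp (by omega) h1 h2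
  refine ⟨V, hV, G, hdeg, hcol, hgirth, ?_⟩
  have hd4 : ((d : ℝ)) ^ 4 ≤ 8 * (((G.power 4).chromaticNumber.toNat : ℕ) : ℝ) := by
    exact_mod_cast hchrom
  have hd0 : (0 : ℝ) ≤ (d : ℝ) ^ 4 := by positivity
  nlinarith
end
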